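/- arXiv:1711.05302 — 4 statements merged into one kernel-verified Lean document; each statement's English description precedes it below -/
import Mathlib

section
/- Let Γ be a free abelian group of finite rank, ‖·‖ a norm on Γ ⊗ ℝ, ω : Γ → ℝ a group homomorphism, C > 0 a real constant, and β ∈ Γ. Then the set of finite multisets {β_v} of nonzero elements of Γ satisfying Σ_v β_v = β and ‖β_v‖ ≤ C·ω(β_v) for every v is finite. -/
open scoped TensorProduct

/-- Auxiliary: the set of multisets with elements in a finite set and bounded
cardinality is finite. -/
lemma aux_multiset_finite {α : Type*} {T : Set α} (hT : T.Finite) (N : ℕ) :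
    {S : Multiset α | (∀ x ∈ S, x ∈ T) ∧ Multiset.card S ≤ N}.Finite := by
  haveI := hT.to_subtype
  have himg : {S : Multiset α | (∀ x ∈ S, x ∈ T) ∧ Multiset.card S ≤ N} ⊆
      (fun l : List T => ((l.map Subtype.val : List α) : Multiset α)) '' {l | l.length ≤ N} := by
    rintro S ⟨hS, hcard⟩
    let S' : Multiset T := S.attach.map fun x => ⟨x.1, hS x.1 x.2⟩
    refine ⟨S'.toList, ?_, ?_⟩
    · have h1 : S'.toList.length = Multiset.card S' := Multiset.length_toList S'
      have h2 : Multiset.card S' = Multiset.card S := by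
        simp [S']
      simpa [Set.mem_setOf_eq, h1, h2] using hcard
    · show ((S'.toList.map Subtype.val : List α) : Multiset α) = S
      calc ((S'.toList.map Subtype.val : List α) : Multiset α)
          = Multiset.map Subtype.val (S'.toList : Multiset T) := by
            rw [Multiset.map_coe]
        _ = Multiset.map Subtype.val S' := by rw [Multiset.coe_toList]
        _ = S := by
            simp only [S', Multiset.map_map, Function.comp]
            exact Multiset.attach_map_val S
  exact ((List.finite_length_le T N).image _).subset himg

/-- Let `Γ` be a free abelian group of finite rank, `nm` a norm on
`Γ ⊗ ℝ` (formalized as `ℝ ⊗[ℤ] Γ`, with `γ ↦ 1 ⊗ γ` the canonical embedding; the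
homogeneity hypothesis `hnm` makes `nm` a genuine vector-space norm), `ω : Γ → ℝ` a group
homomorphism, `C > 0` a real constant and `β ∈ Γ`.  Then the set of finite multisets
`{β_v}` of nonzero elements of `Γ` with `Σ_v β_v = β` and `‖β_v‖ ≤ C·ω(β_v)` for every `v`
is finite. -/
theorem finite_multisets_of_charge_bound
    (Γ : Type*) [AddCommGroup Γ] [Module.Free ℤ Γ] [Module.Finite ℤ Γ]
    (nm : AddGroupNorm (ℝ ⊗[ℤ] Γ))
    (hnm : ∀ (c : ℝ) (x : ℝ ⊗[ℤ] Γ), nm (c • x) = |c| * nm x)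
    (ω : Γ →+ ℝ) (C : ℝ) (hC : 0 < C) (β : Γ) :
    {S : Multiset Γ |
      (∀ γ ∈ S, γ ≠ 0 ∧ nm ((1 : ℝ) ⊗ₜ[ℤ] γ) ≤ C * ω γ) ∧ S.sum = β}.Finite := by
  classical
  set ι := Module.Free.ChooseBasisIndex ℤ Γ with hι
  let b : Module.Basis ι ℤ Γ := Module.Free.chooseBasis ℤ Γ
  letI : NormedAddCommGroup (ℝ ⊗[ℤ] Γ) := nm.toNormedAddCommGroup
  have hnorm : ∀ x : ℝ ⊗[ℤ] Γ, ‖x‖ = nm x := fun _ => rfl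
  letI : NormedSpace ℝ (ℝ ⊗[ℤ] Γ) :=
    ⟨fun c x => le_of_eq (by rw [hnorm, hnorm, hnm, Real.norm_eq_abs])⟩
  let bR : Module.Basis ι ℝ (ℝ ⊗[ℤ] Γ) := b.baseChange ℝ
  haveI : FiniteDimensional ℝ (ℝ ⊗[ℤ] Γ) := Module.Finite.of_basis bR
  -- injectivity of the canonical embedding
  have hinj : Function.Injective (fun γ : Γ => (1 : ℝ) ⊗ₜ[ℤ] γ) := by
    intro x y h
    apply b.repr.injective
    ext i
    have h2 := congrArg (fun z => (bR.repr z) i) h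
    simp only [bR, Module.Basis.baseChange_repr_tmul, zsmul_eq_mul, mul_one] at h2
    exact_mod_cast h2
  -- the embedding lands in the ℤ-span of the base-changed basis
  have hmem : ∀ γ : Γ, (1 : ℝ) ⊗ₜ[ℤ] γ ∈ Submodule.span ℤ (Set.range bR) := by
    intro γ
    have hγ : γ ∈ Submodule.span ℤ (Set.range b) := by rw [b.span_eq]; trivial
    refine Submodule.span_induction ?_ ?_ ?_ ?_ hγ
    · rintro _ ⟨i, rfl⟩
      exact Submodule.subset_span ⟨i, by simp [bR]⟩
    · simpa [TensorProduct.tmul_zero] using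
        (Submodule.span ℤ (Set.range bR)).zero_mem
    · intro x y _ _ hx hy
      simpa [TensorProduct.tmul_add] using
        (Submodule.span ℤ (Set.range bR)).add_mem hx hy
    · intro c x _ hx
      simpa [TensorProduct.tmul_smul] using
        (Submodule.span ℤ (Set.range bR)).smul_mem c hx
  -- lattice points in a ball form a finite set
  have key : ∀ R : ℝ, {γ : Γ | nm ((1 : ℝ) ⊗ₜ[ℤ] γ) ≤ R}.Finite := by
    intro R
    have hb : Bornology.IsBounded (Metric.closedBall (0 : ℝ ⊗[ℤ] Γ) R) :=
      Metric.isBounded_closedBall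
    haveI hdisc : DiscreteTopology
        ((Submodule.span ℤ (Set.range bR)).toAddSubgroup : Set (ℝ ⊗[ℤ] Γ)) :=
      inferInstanceAs (DiscreteTopology (Submodule.span ℤ (Set.range bR)))
    have hclosed : IsClosed
        ((Submodule.span ℤ (Set.range bR)).toAddSubgroup : Set (ℝ ⊗[ℤ] Γ)) :=
      AddSubgroup.isClosed_of_discrete
    have hfin := Metric.finite_isBounded_inter_isClosed hdisc.isDiscrete hb hclosed
    refine Set.Finite.of_finite_image (f := fun γ : Γ => (1 : ℝ) ⊗ₜ[ℤ] γ)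
      (hfin.subset ?_) hinj.injOn
    rintro _ ⟨γ, hγ, rfl⟩
    refine ⟨?_, hmem γ⟩
    simpa [Metric.mem_closedBall, dist_zero_right, hnorm] using hγ
  -- positivity of the norm on nonzero lattice points
  have hpos : ∀ γ : Γ, γ ≠ 0 → 0 < nm ((1 : ℝ) ⊗ₜ[ℤ] γ) := by
    intro γ hγ
    rw [← hnorm]
    rw [norm_pos_iff]
    intro h
    apply hγ
    apply hinj
    simpa [TensorProduct.tmul_zero] using h
  -- elements of an admissible multiset have positive `ω`, bounded by `ω β`
  have hωpos : ∀ S ∈ {S : Multiset Γ |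
      (∀ γ ∈ S, γ ≠ 0 ∧ nm ((1 : ℝ) ⊗ₜ[ℤ] γ) ≤ C * ω γ) ∧ S.sum = β},
      ∀ γ ∈ S, 0 < ω γ := by
    rintro S ⟨h1, _⟩ γ hγ
    obtain ⟨hne, hle⟩ := h1 γ hγ
    have := hpos γ hne
    nlinarith
  have hωle : ∀ S ∈ {S : Multiset Γ |
      (∀ γ ∈ S, γ ≠ 0 ∧ nm ((1 : ℝ) ⊗ₜ[ℤ] γ) ≤ C * ω γ) ∧ S.sum = β},
      ∀ γ ∈ S, ω γ ≤ ω β := by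
    rintro S hS γ hγ
    have hsum : (S.map ω).sum = ω β := by
      rw [← hS.2]; exact (map_multiset_sum ω S).symm
    rw [← hsum]
    refine Multiset.single_le_sum ?_ _ (Multiset.mem_map_of_mem ω hγ)
    intro x hx
    obtain ⟨γ', hγ', rfl⟩ := Multiset.mem_map.mp hx
    exact le_of_lt (hωpos S hS γ' hγ')
  -- the finite set of admissible charges
  set T : Set Γ := {γ : Γ | γ ≠ 0 ∧ nm ((1 : ℝ) ⊗ₜ[ℤ] γ) ≤ C * ω β} with hT
  have hTfin : T.Finite := (key (C * ω β)).subset fun γ hγ => hγ.2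
  have hmemT : ∀ S ∈ {S : Multiset Γ |
      (∀ γ ∈ S, γ ≠ 0 ∧ nm ((1 : ℝ) ⊗ₜ[ℤ] γ) ≤ C * ω γ) ∧ S.sum = β},
      ∀ γ ∈ S, γ ∈ T := by
    rintro S hS γ hγ
    obtain ⟨hne, hle⟩ := hS.1 γ hγ
    refine ⟨hne, hle.trans ?_⟩
    have := hωle S hS γ hγ
    nlinarith
  rcases T.eq_empty_or_nonempty with hTe | hTne
  · -- no admissible charges: only the empty multiset could occur
    refine (Set.finite_singleton (0 : Multiset Γ)).subset ?_
    intro S hS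
    rcases Multiset.empty_or_exists_mem S with h | ⟨γ, hγ⟩
    · simpa using h
    · exact absurd (hmemT S hS γ hγ) (by simp [hTe])
  · -- general case: bound the cardinality
    set ε : ℝ := (hTfin.toFinset.inf' (by simpa using hTne)
      fun γ => nm ((1 : ℝ) ⊗ₜ[ℤ] γ)) / C with hε
    have hεpos : 0 < ε := by
      rw [hε]
      apply div_pos _ hC
      rw [Finset.lt_inf'_iff]
      intro γ hγ
      rw [Set.Finite.mem_toFinset] at hγ
      exact hpos γ hγ.1
    set N : ℕ := ⌈ω β / ε⌉₊ with hN
    refine (aux_multiset_finite hTfin N).subset ?_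
    intro S hS
    refine ⟨hmemT S hS, ?_⟩
    -- cardinality bound
    have hsum : (S.map ω).sum = ω β := by
      rw [← hS.2]; exact (map_multiset_sum ω S).symm
    have hlow : ∀ x ∈ S.map ω, ε ≤ x := by
      intro x hx
      obtain ⟨γ, hγ, rfl⟩ := Multiset.mem_map.mp hx
      have h1 : (hTfin.toFinset.inf' (by simpa using hTne)
          fun γ => nm ((1 : ℝ) ⊗ₜ[ℤ] γ)) ≤ nm ((1 : ℝ) ⊗ₜ[ℤ] γ) :=
        Finset.inf'_le _ (hTfin.mem_toFinset.mpr (hmemT S hS γ hγ))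
      have h2 : nm ((1 : ℝ) ⊗ₜ[ℤ] γ) ≤ C * ω γ := (hS.1 γ hγ).2
      rw [hε, div_le_iff₀ hC]
      nlinarith
    have hcard : (Multiset.card S : ℝ) * ε ≤ ω β := by
      have := Multiset.card_nsmul_le_sum hlow
      rw [hsum, Multiset.card_map] at this
      simpa [nsmul_eq_mul] using this
    have : (Multiset.card S : ℝ) ≤ ω β / ε := by
      rw [le_div_iff₀ hεpos]; exact hcard
    have h2 : (Multiset.card S : ℝ) ≤ (N : ℝ) := this.trans (Nat.le_ceil _)
    exact_mod_cast h2
end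

section
/- Let G be a stable decorated graph. Then the number N₀ of vertices v with β_v = 0 satisfies N₀ ≤ 2(N₁ − χ(G)), where N₁ is the number of vertices v with β_v ≠ 0 and χ(G) = Σ_{v ∈ V(G)} (χ_v − n_v) − |E(G)| is the Euler characteristic of G. -/
/-- A decorated graph (over a group `Γ` of topological charges): a finite set `H` of
half-edges, a finite set `V` of vertices, a fixed-point-free involution `σ` on the
half-edges (whose orbits are the edges), an attaching map `π : H → V`, a charge `β_v ∈ Γ`,
an Euler characteristic `χ_v ≤ 1` and a number of internal punctures `n_v ∈ ℤ_{≥0}` for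
each vertex. -/
structure DecoratedGraph (Γ : Type*) [AddCommGroup Γ] where
  H : Type
  V : Type
  fintypeH : Fintype H
  fintypeV : Fintype V
  σ : H → H
  σ_invol : ∀ h, σ (σ h) = h
  σ_ne : ∀ h, σ h ≠ h
  π : H → V
  β : V → Γ
  χ : V → ℤ
  χ_le_one : ∀ v, χ v ≤ 1
  n : V → ℕ

attribute [instance] DecoratedGraph.fintypeH DecoratedGraph.fintypeV

namespace DecoratedGraph

variable {Γ : Type*} [AddCommGroup Γ] (G : DecoratedGraph Γ)

/-- The set of edges of a decorated graph: the orbits of the involution `σ`. -/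
def EdgeType : Type := Quot (fun a b : G.H => b = a ∨ b = G.σ a)

/-- The number of edges `|E(G)|`. -/
noncomputable def edgeCount : ℕ := Nat.card G.EdgeType

/-- The homology class `β(G) = Σ_v β_v`. -/
noncomputable def homClass : Γ := ∑ v, G.β v

/-- The Euler characteristic `χ(G) = Σ_v (χ_v − n_v) − |E(G)|`. -/
noncomputable def eulerChar : ℤ := (∑ v, (G.χ v - (G.n v : ℤ))) - (G.edgeCount : ℤ)

/-- A vertex `v` is unstable if `β_v = 0` and `2χ_v − |π⁻¹(v)| ≥ 0`; the graph is stable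
if it has no unstable vertices. -/
def Stable : Prop :=
  ∀ v : G.V, ¬ (G.β v = 0 ∧ 0 ≤ 2 * G.χ v - (Nat.card {h : G.H // G.π h = v} : ℤ))

end DecoratedGraph

section Aux

open DecoratedGraph

variable {Γ : Type*} [AddCommGroup Γ] (G : DecoratedGraph Γ)

private lemma aux_equiv : Equivalence (fun a b : G.H => b = a ∨ b = G.σ a) := by
  constructor
  · intro a; exact Or.inl rfl
  · rintro a b (rfl | rfl)
    · exact Or.inl rfl
    · exact Or.inr (G.σ_invol a).symm
  · rintro a b c (rfl | rfl) h <;> rcases h with rfl | rfl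
    · exact Or.inl rfl
    · exact Or.inr rfl
    · exact Or.inr rfl
    · exact Or.inl (G.σ_invol a)

private lemma aux_mk_eq {a b : G.H} :
    (Quot.mk _ a : G.EdgeType) = Quot.mk _ b ↔ (b = a ∨ b = G.σ a) := by
  rw [Quot.eq]
  exact Equivalence.eqvGen_iff (aux_equiv G)

private lemma aux_card_H_le : Nat.card G.H ≤ 2 * Nat.card G.EdgeType := by
  classical
  have hfin : Finite G.EdgeType :=
    Finite.of_surjective (Quot.mk _) (Quot.mk_surjective)
  have hinj : Function.Injective
      (fun h : G.H => ((Quot.mk _ h : G.EdgeType),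
        (h = (Quot.mk (fun a b : G.H => b = a ∨ b = G.σ a) h).out : Prop))) := by
    intro h h' he
    simp only [Prod.mk.injEq, eq_iff_iff] at he
    obtain ⟨h1, h2⟩ := he
    have hr : h' = h ∨ h' = G.σ h := (aux_mk_eq G).mp h1
    rw [h1] at h2
    set o := (Quot.mk (fun a b : G.H => b = a ∨ b = G.σ a) h').out with ho
    have houteq : (Quot.mk (fun a b : G.H => b = a ∨ b = G.σ a) h' : G.EdgeType)
        = Quot.mk _ o := (Quot.out_eq _).symm
    have hro : o = h' ∨ o = G.σ h' := (aux_mk_eq G).mp houteq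
    by_cases hh : h = o
    · have : h' = o := h2.mp hh
      rw [hh, this]
    · have hh' : h' ≠ o := fun hc => hh (h2.mpr hc)
      rcases hr with rfl | rfl
      · rfl
      · -- h' = σ h impossible unless consistent; use hro
        rcases hro with hc | hc
        · exact absurd hc.symm hh'
        · -- o = σ h' = σ (σ h) = h
          exfalso
          apply hh
          rw [hc, G.σ_invol]
  have h1 : Nat.card G.H ≤ Nat.card (G.EdgeType × Prop) :=
    Nat.card_le_card_of_injective _ hinj
  have hcard : Nat.card (G.EdgeType × Prop) = Nat.card G.EdgeType * 2 := by
    rw [Nat.card_prod]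
    congr 1
    simp [Nat.card_eq_fintype_card]
  omega

private lemma aux_card_H_eq :
    Nat.card G.H = ∑ v, Nat.card {h : G.H // G.π h = v} := by
  classical
  simp only [Nat.card_eq_fintype_card]
  rw [← Fintype.card_sigma]
  exact Fintype.card_congr (Equiv.sigmaFiberEquiv G.π).symm

end Aux

/-- For a stable decorated graph `G`, the number `N₀` of vertices with
`β_v = 0` satisfies `N₀ ≤ 2(N₁ − χ(G))`, where `N₁` is the number of vertices with
`β_v ≠ 0` and `χ(G)` is the Euler characteristic of `G`. -/
theorem zero_charge_vertex_bound {Γ : Type*} [AddCommGroup Γ]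
    (G : DecoratedGraph Γ) (hG : G.Stable) :
    (Nat.card {v : G.V // G.β v = 0} : ℤ) ≤
      2 * ((Nat.card {v : G.V // G.β v ≠ 0} : ℤ) - G.eulerChar) := by
  classical
  set d : G.V → ℤ := fun v => (Nat.card {h : G.H // G.π h = v} : ℤ) with hd
  have hE : (∑ v, d v) ≤ 2 * (G.edgeCount : ℤ) := by
    have h1 := aux_card_H_le G
    have h2 := aux_card_H_eq G
    have : (Nat.card G.H : ℤ) = ∑ v, d v := by
      rw [h2]; push_cast; rfl
    rw [← this]
    unfold DecoratedGraph.edgeCount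
    exact_mod_cast h1
  have hN0 : (Nat.card {v : G.V // G.β v = 0} : ℤ)
      = ∑ v, (if G.β v = 0 then (1 : ℤ) else 0) := by
    rw [Nat.card_eq_fintype_card, Fintype.card_subtype, Finset.card_filter]
    push_cast
    rfl
  have hN1 : (Nat.card {v : G.V // G.β v ≠ 0} : ℤ)
      = ∑ v, (if G.β v ≠ 0 then (1 : ℤ) else 0) := by
    rw [Nat.card_eq_fintype_card, Fintype.card_subtype, Finset.card_filter]
    push_cast
    rfl
  have key : ∑ v, (if G.β v = 0 then (1 : ℤ) else 0) ≤
      ∑ v, (2 * (if G.β v ≠ 0 then (1 : ℤ) else 0)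
        - (2 * G.χ v - 2 * (G.n v : ℤ) - d v)) := by
    apply Finset.sum_le_sum
    intro v _
    have hχ := G.χ_le_one v
    have hn : (0 : ℤ) ≤ (G.n v : ℤ) := Int.ofNat_nonneg _
    have hdpos : (0 : ℤ) ≤ d v := Int.ofNat_nonneg _
    by_cases hb : G.β v = 0
    · have hs := hG v
      have : 2 * G.χ v - d v < 0 := by
        by_contra hc
        exact hs ⟨hb, le_of_not_gt hc⟩
      rw [if_pos hb, if_neg (not_not_intro hb)]
      linarith
    · rw [if_neg hb, if_pos hb]
      linarith
  rw [hN0, hN1] at *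
  unfold DecoratedGraph.eulerChar
  rw [Finset.sum_sub_distrib] at key
  rw [Finset.sum_sub_distrib]
  rw [← Finset.mul_sum] at key
  have expand : ∑ v, (2 * G.χ v - 2 * (G.n v : ℤ) - d v)
      = 2 * ∑ v, G.χ v - 2 * ∑ v, (G.n v : ℤ) - ∑ v, d v := by
    rw [Finset.sum_sub_distrib, Finset.sum_sub_distrib, ← Finset.mul_sum, ← Finset.mul_sum]
  rw [expand] at key
  linarith
end

section
/- Let Γ be a free abelian group of finite rank, ‖·‖ a norm on Γ ⊗ ℝ, ω : Γ → ℝ a group homomorphism, C > 0, β ∈ Γ, and χ ∈ ℤ. Then the set 𝔊(β, χ, C) of isomorphism classes of stable decorated graphs G with homology class β(G) = β, Euler characteristic χ(G) = χ, and ‖β_v‖ ≤ C·ω(β_v) for every vertex v, is finite. -/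
/-- An isomorphism of decorated graphs: a pair of bijections on half-edges and vertices
commuting with `σ` and `π` and preserving the decorations `β̃`, `χ̃`, `ñ`. -/
def DecoratedGraph.Isomorphic {Γ : Type*} [AddCommGroup Γ]
    (G G' : DecoratedGraph Γ) : Prop :=
  ∃ (eH : G.H ≃ G'.H) (eV : G.V ≃ G'.V),
    (∀ h, eH (G.σ h) = G'.σ (eH h)) ∧
    (∀ h, eV (G.π h) = G'.π (eH h)) ∧
    (∀ v, G'.β (eV v) = G.β v) ∧
    (∀ v, G'.χ (eV v) = G.χ v) ∧
    (∀ v, G'.n (eV v) = G.n v)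

open scoped TensorProduct

section AuxLemmas

open scoped TensorProduct

variable (Γ : Type*) [AddCommGroup Γ] [Module.Free ℤ Γ] [Module.Finite ℤ Γ]
  (nm : AddGroupNorm (ℝ ⊗[ℤ] Γ))
  (hnm : ∀ (c : ℝ) (x : ℝ ⊗[ℤ] Γ), nm (c • x) = |c| * nm x)

omit [Module.Finite ℤ Γ] in
lemma aux_repr (b : Module.Basis (Module.Free.ChooseBasisIndex ℤ Γ) ℤ Γ) (γ : Γ) (i) :
    ((b.baseChange ℝ).repr ((1:ℝ) ⊗ₜ[ℤ] γ)) i = (b.repr γ i : ℝ) := by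
  rw [Module.Basis.baseChange_repr_tmul]
  simp

omit [Module.Finite ℤ Γ] in
lemma tmul_injective : Function.Injective (fun γ : Γ => (1:ℝ) ⊗ₜ[ℤ] γ) := by
  classical
  let b := Module.Free.chooseBasis ℤ Γ
  intro x y h
  apply b.repr.injective
  ext i
  have := congrArg (fun z => ((b.baseChange ℝ).repr z) i) h
  simp only [aux_repr] at this
  exact_mod_cast this

include hnm in
lemma finite_ball (R : ℝ) : {γ : Γ | nm ((1:ℝ) ⊗ₜ[ℤ] γ) ≤ R}.Finite := by
  classical
  letI : NormedAddCommGroup (ℝ ⊗[ℤ] Γ) := nm.toNormedAddCommGroup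
  letI : NormedSpace ℝ (ℝ ⊗[ℤ] Γ) :=
    ⟨fun {c x} => le_of_eq (by rw [Real.norm_eq_abs]; exact hnm c x)⟩
  haveI : FiniteDimensional ℝ (ℝ ⊗[ℤ] Γ) := inferInstance
  let b := Module.Free.chooseBasis ℤ Γ
  let b' := b.baseChange ℝ
  let c : Module.Free.ChooseBasisIndex ℤ Γ → ℝ := fun i =>
    ‖(LinearMap.toContinuousLinearMap (b'.coord i) : (ℝ ⊗[ℤ] Γ) →L[ℝ] ℝ)‖
  have hbound : ∀ γ ∈ {γ : Γ | nm ((1:ℝ) ⊗ₜ[ℤ] γ) ≤ R}, ∀ i,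
      |(b.repr γ i : ℝ)| ≤ c i * R := by
    intro γ hγ i
    have h1 : |(b.repr γ i : ℝ)| ≤ c i * ‖(1:ℝ) ⊗ₜ[ℤ] γ‖ := by
      have := (LinearMap.toContinuousLinearMap (b'.coord i)).le_opNorm ((1:ℝ) ⊗ₜ[ℤ] γ)
      simp only [Real.norm_eq_abs, LinearMap.coe_toContinuousLinearMap', Module.Basis.coord_apply] at this
      rw [← aux_repr Γ b γ i]
      exact this
    refine h1.trans (mul_le_mul_of_nonneg_left hγ (norm_nonneg _))
  have hinj : Function.Injective (fun γ : Γ => (fun i => b.repr γ i)) := by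
    intro x y h
    apply b.repr.injective
    ext i
    exact congrFun h i
  have hT : (Set.pi Set.univ (fun i => (Set.Icc (-(⌊c i * R⌋)) ⌊c i * R⌋ : Set ℤ))).Finite :=
    Set.Finite.pi (fun i => Set.finite_Icc _ _)
  refine Set.Finite.subset ((hT.preimage hinj.injOn)) ?_
  intro γ hγ i _
  have h2 : |b.repr γ i| ≤ ⌊c i * R⌋ :=
    Int.le_floor.mpr (by push_cast; exact hbound γ hγ i)
  exact abs_le.mp h2

end AuxLemmas

namespace DecoratedGraph

variable {Γ : Type*} [AddCommGroup Γ] (G : DecoratedGraph Γ)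

lemma equiv_r : Equivalence (fun a b : G.H => b = a ∨ b = G.σ a) := by
  constructor
  · exact fun a => Or.inl rfl
  · rintro a b (rfl | rfl)
    · exact Or.inl rfl
    · exact Or.inr (G.σ_invol a).symm
  · rintro a b c (rfl | rfl) (rfl | rfl)
    · exact Or.inl rfl
    · exact Or.inr rfl
    · exact Or.inr rfl
    · exact Or.inl (G.σ_invol a)

lemma mk_eq_mk (a b : G.H) :
    (Quot.mk _ a : G.EdgeType) = Quot.mk _ b ↔ (b = a ∨ b = G.σ a) := by
  rw [Quot.eq]
  exact (G.equiv_r).eqvGen_iff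

instance : Finite G.EdgeType := Quot.finite _

lemma card_H_eq : Nat.card G.H = 2 * G.edgeCount := by
  classical
  have hmkσ : ∀ a : G.H, (Quot.mk _ (G.σ a) : G.EdgeType) = Quot.mk _ a :=
    fun a => Quot.sound (Or.inr (G.σ_invol a).symm)
  have houtinj : Function.Injective (Quot.out : G.EdgeType → G.H) :=
    fun e f h => by rw [← e.out_eq, ← f.out_eq, h]
  have hσinj : Function.Injective G.σ := fun x y h => by
    rw [← G.σ_invol x, h, G.σ_invol]
  have hout : ∀ a : G.H,
      a = (Quot.mk _ a : G.EdgeType).out ∨ a = G.σ (Quot.mk _ a : G.EdgeType).out := by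
    intro a
    rw [← G.mk_eq_mk]
    exact Quot.out_eq _
  have f1 : Function.Injective (fun p : G.EdgeType × Bool =>
      if p.2 then p.1.out else G.σ p.1.out) := by
    rintro ⟨e, (x|x)⟩ ⟨f, (y|y)⟩ h <;>
      simp only [if_true, if_false, Bool.false_eq_true] at h
    · exact congrArg (fun z => (z, false)) (houtinj (hσinj h))
    · exfalso
      have hef : e = f := by
        have h2 : (Quot.mk _ (G.σ e.out) : G.EdgeType) = Quot.mk _ f.out := congrArg _ h
        rw [hmkσ] at h2
        exact (Quot.out_eq e).symm.trans (h2.trans (Quot.out_eq f))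
      subst hef
      exact G.σ_ne e.out h
    · exfalso
      have hef : e = f := by
        have h2 : (Quot.mk _ e.out : G.EdgeType) = Quot.mk _ (G.σ f.out) := congrArg _ h
        rw [hmkσ] at h2
        exact (Quot.out_eq e).symm.trans (h2.trans (Quot.out_eq f))
      subst hef
      exact G.σ_ne e.out h.symm
    · exact congrArg (fun z => (z, true)) (houtinj h)
  have f2 : Function.Injective (fun a : G.H =>
      ((Quot.mk _ a : G.EdgeType), decide (a = (Quot.mk _ a : G.EdgeType).out))) := by
    intro a b hab
    have h1 : (Quot.mk _ a : G.EdgeType) = Quot.mk _ b := congrArg Prod.fst hab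
    have h2 : decide (a = (Quot.mk _ a : G.EdgeType).out)
        = decide (b = (Quot.mk _ b : G.EdgeType).out) := congrArg Prod.snd hab
    rw [h1] at h2
    simp only [decide_eq_decide] at h2
    rcases hout a with ha | ha <;> rw [h1] at ha <;> rcases hout b with hb | hb
    · exact ha.trans hb.symm
    · exact absurd (hb.symm.trans (h2.mp ha)) (G.σ_ne _)
    · exact absurd (ha.symm.trans (h2.mpr hb)) (G.σ_ne _)
    · exact ha.trans hb.symm
  have hle1 : Nat.card (G.EdgeType × Bool) ≤ Nat.card G.H := Nat.card_le_card_of_injective _ f1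
  have hle2 : Nat.card G.H ≤ Nat.card (G.EdgeType × Bool) := Nat.card_le_card_of_injective _ f2
  have hcard : Nat.card (G.EdgeType × Bool) = 2 * G.edgeCount := by
    rw [Nat.card_prod, Nat.card_eq_fintype_card (α := Bool)]
    simp [edgeCount, mul_comm]
  omega

lemma card_H_eq_sum_deg :
    Fintype.card G.H = ∑ v : G.V, Nat.card {h : G.H // G.π h = v} := by
  classical
  rw [← Fintype.card_congr (Equiv.sigmaFiberEquiv G.π), Fintype.card_sigma]
  exact Finset.sum_congr rfl fun v _ => (Nat.card_eq_fintype_card).symm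

end DecoratedGraph

/-- A junk graph used as a default value. -/
def junkGraph (Γ : Type*) [AddCommGroup Γ] : DecoratedGraph Γ where
  H := Empty
  V := Empty
  fintypeH := inferInstance
  fintypeV := inferInstance
  σ := fun h => h.elim
  σ_invol := fun h => h.elim
  σ_ne := fun h => h.elim
  π := fun h => h.elim
  β := fun v => v.elim
  χ := fun v => v.elim
  χ_le_one := fun v => v.elim
  n := fun v => v.elim

/-- The bounded data from which we build candidate graphs. -/
abbrev GraphData (Γ : Type*) (kB mB nB : ℕ) (Sf : Finset Γ) (lo : ℤ) :=
  Σ k : Fin (kB+1), Σ m : Fin (mB+1),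
    (Fin k → Fin k) × (Fin k → Fin m) × (Fin m → {γ // γ ∈ Sf}) ×
    (Fin m → {z : ℤ // z ∈ Finset.Icc lo 1}) × (Fin m → Fin (nB+1))

open Classical in
/-- Build a decorated graph from graph data. -/
noncomputable def mkGraph {Γ : Type*} [AddCommGroup Γ] {kB mB nB : ℕ} {Sf : Finset Γ} {lo : ℤ}
    (d : GraphData Γ kB mB nB Sf lo) : DecoratedGraph Γ :=
  if h : (∀ i, d.2.2.1 (d.2.2.1 i) = i) ∧ (∀ i, d.2.2.1 i ≠ i) then
    { H := Fin d.1
      V := Fin d.2.1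
      fintypeH := inferInstance
      fintypeV := inferInstance
      σ := d.2.2.1
      σ_invol := h.1
      σ_ne := h.2
      π := d.2.2.2.1
      β := fun v => (d.2.2.2.2.1 v : Γ)
      χ := fun v => (d.2.2.2.2.2.1 v : ℤ)
      χ_le_one := fun v => (Finset.mem_Icc.mp (d.2.2.2.2.2.1 v).2).2
      n := fun v => (d.2.2.2.2.2.2 v : ℕ) }
  else junkGraph Γ


/-- Let `Γ` be a free abelian group of finite rank, `nm` a norm on
`Γ ⊗ ℝ` (formalized as `ℝ ⊗[ℤ] Γ`, with `γ ↦ 1 ⊗ γ` the canonical embedding), `ω : Γ → ℝ`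
a group homomorphism, `C > 0`, `β ∈ Γ` and `χ ∈ ℤ`.  Then the set `𝔊(β, χ, C)` of
isomorphism classes of stable decorated graphs `G` with homology class `β(G) = β`, Euler
characteristic `χ(G) = χ` and `‖β_v‖ ≤ C·ω(β_v)` for every vertex `v` is finite, i.e.
there is a finite list of decorated graphs containing a representative of every such
isomorphism class. -/

theorem finitely_many_stable_graphs
    (Γ : Type*) [AddCommGroup Γ] [Module.Free ℤ Γ] [Module.Finite ℤ Γ]
    (nm : AddGroupNorm (ℝ ⊗[ℤ] Γ))
    (hnm : ∀ (c : ℝ) (x : ℝ ⊗[ℤ] Γ), nm (c • x) = |c| * nm x)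
    (ω : Γ →+ ℝ) (C : ℝ) (hC : 0 < C) (β : Γ) (χ : ℤ) :
    ∃ l : List (DecoratedGraph Γ), ∀ G : DecoratedGraph Γ,
      G.Stable → G.homClass = β → G.eulerChar = χ →
      (∀ v : G.V, nm ((1 : ℝ) ⊗ₜ[ℤ] G.β v) ≤ C * ω (G.β v)) →
      ∃ G' ∈ l, G.Isomorphic G' := by
  classical
  have hfin : {γ : Γ | nm ((1:ℝ) ⊗ₜ[ℤ] γ) ≤ C * ω β}.Finite := finite_ball Γ nm hnm _
  set Sfin : Finset Γ := hfin.toFinset with hSfin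
  set S0 : Finset Γ := Sfin.filter (· ≠ 0) with hS0
  set ε : ℝ := if h : S0.Nonempty then (S0.inf' h fun γ => nm ((1:ℝ) ⊗ₜ[ℤ] γ)) / C else 1
    with hε
  have hεpos : 0 < ε := by
    rw [hε]
    split_ifs with h
    · apply div_pos _ hC
      rw [Finset.lt_inf'_iff]
      intro γ hγ
      have hγ0 : γ ≠ 0 := (Finset.mem_filter.mp hγ).2
      have h0 : (1:ℝ) ⊗ₜ[ℤ] γ ≠ (0 : ℝ ⊗[ℤ] Γ) := by
        intro hc
        apply hγ0
        apply tmul_injective Γ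
        show (1:ℝ) ⊗ₜ[ℤ] γ = (1:ℝ) ⊗ₜ[ℤ] (0:Γ)
        rw [hc, TensorProduct.tmul_zero]
      have h0' : nm ((1:ℝ) ⊗ₜ[ℤ] γ) ≠ 0 := fun hz => h0 ((map_eq_zero_iff_eq_zero nm).mp hz)
      exact lt_of_le_of_ne (apply_nonneg nm _) (Ne.symm h0')
    · exact one_pos
  set N₁ : ℕ := ⌈ω β / ε⌉₊ with hN₁
  set mB : ℕ := (3 * (N₁ : ℤ) - 2 * χ).toNat with hmB
  set nB : ℕ := ((mB : ℤ) - χ).toNat with hnB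
  set kB : ℕ := (2 * ((mB : ℤ) - χ)).toNat with hkB
  set lo : ℤ := χ - (mB : ℤ) with hlo
  refine ⟨((Finset.univ : Finset (GraphData Γ kB mB nB Sfin lo)).toList).map mkGraph, ?_⟩
  intro G hst hhom heul hbd
  -- basic facts
  have hhom' : ∑ v, G.β v = β := hhom
  have heul' : (∑ v, (G.χ v - (G.n v : ℤ))) - (G.edgeCount : ℤ) = χ := heul
  have hωv : ∀ v, 0 ≤ ω (G.β v) := by
    intro v
    have h1 : (0:ℝ) ≤ C * ω (G.β v) := le_trans (apply_nonneg nm _) (hbd v)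
    nlinarith
  have hsum : ∑ v, ω (G.β v) = ω β := by rw [← map_sum, hhom']
  have hωle : ∀ v, ω (G.β v) ≤ ω β := fun v =>
    hsum ▸ Finset.single_le_sum (fun w _ => hωv w) (Finset.mem_univ v)
  have hmemS : ∀ v, G.β v ∈ Sfin := by
    intro v
    rw [hSfin, Set.Finite.mem_toFinset]
    exact le_trans (hbd v) (mul_le_mul_of_nonneg_left (hωle v) hC.le)
  have hεle : ∀ v, G.β v ≠ 0 → ε ≤ ω (G.β v) := by
    intro v hv
    have hmem0 : G.β v ∈ S0 := Finset.mem_filter.mpr ⟨hmemS v, hv⟩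
    have hne : S0.Nonempty := ⟨_, hmem0⟩
    rw [hε, dif_pos hne, div_le_iff₀ hC]
    calc S0.inf' hne (fun γ => nm ((1:ℝ) ⊗ₜ[ℤ] γ)) ≤ nm ((1:ℝ) ⊗ₜ[ℤ] G.β v) :=
          Finset.inf'_le _ hmem0
      _ ≤ C * ω (G.β v) := hbd v
      _ = ω (G.β v) * C := mul_comm _ _
  set A : Finset G.V := Finset.univ.filter (fun v => G.β v ≠ 0) with hA
  have hAcard : (A.card : ℝ) * ε ≤ ω β := by
    calc (A.card : ℝ) * ε = ∑ _v ∈ A, ε := by rw [Finset.sum_const, nsmul_eq_mul]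
      _ ≤ ∑ v ∈ A, ω (G.β v) :=
          Finset.sum_le_sum (fun v hv => hεle v (Finset.mem_filter.mp hv).2)
      _ ≤ ∑ v, ω (G.β v) :=
          Finset.sum_le_sum_of_subset_of_nonneg (Finset.filter_subset _ _)
            (fun v _ _ => hωv v)
      _ = ω β := hsum
  have hAN : A.card ≤ N₁ := by
    have h1 : (A.card : ℝ) ≤ ω β / ε := (le_div_iff₀ hεpos).mpr hAcard
    have h2 : ω β / ε ≤ (N₁ : ℝ) := Nat.le_ceil _
    exact_mod_cast h1.trans h2
  -- degree and edge counts
  have hdegsum : (Fintype.card G.H : ℤ) = ∑ v, (Nat.card {h : G.H // G.π h = v} : ℤ) := by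
    exact_mod_cast congrArg (Nat.cast (R := ℤ)) G.card_H_eq_sum_deg
  have hH2E : (Fintype.card G.H : ℤ) = 2 * (G.edgeCount : ℤ) := by
    have := (Nat.card_eq_fintype_card (α := G.H)).symm.trans G.card_H_eq
    exact_mod_cast this
  have hstab : ∀ v, G.β v = 0 → 2 * G.χ v - (Nat.card {h : G.H // G.π h = v} : ℤ) ≤ -1 := by
    intro v hv
    have h1 := hst v
    push_neg at h1
    have h2 := h1 hv
    omega
  -- the key cardinality inequality
  have hkey : 2 * χ ≤ 3 * (A.card : ℤ) - (Fintype.card G.V : ℤ) := by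
    have e1 : 2 * χ =
        ∑ v, (2 * G.χ v - 2 * (G.n v : ℤ) - (Nat.card {h : G.H // G.π h = v} : ℤ)) := by
      have e2 : ∑ v, (2 * G.χ v - 2 * (G.n v : ℤ) - (Nat.card {h : G.H // G.π h = v} : ℤ))
          = 2 * (∑ v, (G.χ v - (G.n v : ℤ))) - ∑ v, (Nat.card {h : G.H // G.π h = v} : ℤ) := by
        rw [Finset.sum_sub_distrib, Finset.mul_sum]
        congr 1
        apply Finset.sum_congr rfl
        intro v _
        ring
      rw [e2, ← hdegsum, hH2E]
      linarith
    have hsplit : ∑ v, (2 * G.χ v - 2 * (G.n v : ℤ) - (Nat.card {h : G.H // G.π h = v} : ℤ))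
        = ∑ v ∈ A, (2 * G.χ v - 2 * (G.n v : ℤ) - (Nat.card {h : G.H // G.π h = v} : ℤ))
        + ∑ v ∈ Finset.univ.filter (fun v => ¬ G.β v ≠ 0),
            (2 * G.χ v - 2 * (G.n v : ℤ) - (Nat.card {h : G.H // G.π h = v} : ℤ)) :=
      (Finset.sum_filter_add_sum_filter_not _ _ _).symm
    have hA2 : ∑ v ∈ A, (2 * G.χ v - 2 * (G.n v : ℤ) - (Nat.card {h : G.H // G.π h = v} : ℤ))
        ≤ 2 * (A.card : ℤ) := by
      calc ∑ v ∈ A, (2 * G.χ v - 2 * (G.n v : ℤ) - (Nat.card {h : G.H // G.π h = v} : ℤ))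
          ≤ ∑ _v ∈ A, (2 : ℤ) := by
            apply Finset.sum_le_sum
            intro v _
            have h1 := G.χ_le_one v
            have h2 : (0:ℤ) ≤ (G.n v : ℤ) := Int.natCast_nonneg _
            have h3 : (0:ℤ) ≤ (Nat.card {h : G.H // G.π h = v} : ℤ) := Int.natCast_nonneg _
            omega
        _ = 2 * (A.card : ℤ) := by rw [Finset.sum_const, nsmul_eq_mul]; ring
    have hB2 : ∑ v ∈ Finset.univ.filter (fun v => ¬ G.β v ≠ 0),
          (2 * G.χ v - 2 * (G.n v : ℤ) - (Nat.card {h : G.H // G.π h = v} : ℤ))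
        ≤ - ((Finset.univ.filter (fun v => ¬ G.β v ≠ 0)).card : ℤ) := by
      calc ∑ v ∈ Finset.univ.filter (fun v => ¬ G.β v ≠ 0),
            (2 * G.χ v - 2 * (G.n v : ℤ) - (Nat.card {h : G.H // G.π h = v} : ℤ))
          ≤ ∑ _v ∈ Finset.univ.filter (fun v => ¬ G.β v ≠ 0), (-1 : ℤ) := by
            apply Finset.sum_le_sum
            intro v hv
            have hv0 : G.β v = 0 := not_not.mp (Finset.mem_filter.mp hv).2
            have h1 := hstab v hv0
            have h2 : (0:ℤ) ≤ (G.n v : ℤ) := Int.natCast_nonneg _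
            omega
        _ = - ((Finset.univ.filter (fun v => ¬ G.β v ≠ 0)).card : ℤ) := by
            rw [Finset.sum_const, nsmul_eq_mul]
            ring
    have hcards : A.card + (Finset.univ.filter (fun v => ¬ G.β v ≠ 0)).card
        = Fintype.card G.V := by
      rw [hA, Finset.card_filter_add_card_filter_not, Finset.card_univ]
    have hcards' : (A.card : ℤ) + ((Finset.univ.filter (fun v => ¬ G.β v ≠ 0)).card : ℤ)
        = (Fintype.card G.V : ℤ) := by exact_mod_cast hcards
    linarith [e1, hsplit, hA2, hB2]
  -- bounds on all quantities
  have hm : Fintype.card G.V ≤ mB := by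
    have h1 : (A.card : ℤ) ≤ (N₁ : ℤ) := by exact_mod_cast hAN
    have h2 : (Fintype.card G.V : ℤ) ≤ 3 * (N₁ : ℤ) - 2 * χ := by linarith
    omega
  have hmZ : (Fintype.card G.V : ℤ) ≤ (mB : ℤ) := by exact_mod_cast hm
  have hχsum : ∑ v, (G.χ v - (G.n v : ℤ)) ≤ (Fintype.card G.V : ℤ) := by
    calc ∑ v, (G.χ v - (G.n v : ℤ)) ≤ ∑ _v : G.V, (1 : ℤ) := by
          apply Finset.sum_le_sum
          intro v _
          have h1 := G.χ_le_one v
          have h2 : (0:ℤ) ≤ (G.n v : ℤ) := Int.natCast_nonneg _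
          omega
      _ = (Fintype.card G.V : ℤ) := by simp
  have hEbound : (G.edgeCount : ℤ) ≤ (mB : ℤ) - χ := by linarith
  have hk : Fintype.card G.H ≤ kB := by
    have h1 : (Fintype.card G.H : ℤ) ≤ 2 * ((mB : ℤ) - χ) := by
      rw [hH2E]; linarith
    omega
  have hsums : ∑ v, G.χ v - ∑ v, (G.n v : ℤ) - (G.edgeCount : ℤ) = χ := by
    rw [← Finset.sum_sub_distrib]
    exact heul'
  have hχsum2 : ∑ v, G.χ v ≤ (Fintype.card G.V : ℤ) := by
    calc ∑ v, G.χ v ≤ ∑ _v : G.V, (1 : ℤ) :=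
          Finset.sum_le_sum (fun v _ => G.χ_le_one v)
      _ = (Fintype.card G.V : ℤ) := by simp
  have hnsum : ∑ v, (G.n v : ℤ) ≤ (mB : ℤ) - χ := by
    have h0 : (0:ℤ) ≤ (G.edgeCount : ℤ) := Int.natCast_nonneg _
    linarith
  have hnB : ∀ v, G.n v < nB + 1 := by
    intro v
    have h1 : (G.n v : ℤ) ≤ ∑ w, (G.n w : ℤ) :=
      Finset.single_le_sum (fun w _ => Int.natCast_nonneg _) (Finset.mem_univ v)
    have h2 : (G.n v : ℤ) ≤ (mB : ℤ) - χ := le_trans h1 hnsum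
    omega
  have hχlo : ∀ v, lo ≤ G.χ v := by
    intro v
    have h1 : ∑ w, G.χ w = χ + (G.edgeCount : ℤ) + ∑ w, (G.n w : ℤ) := by linarith
    have h4 : G.χ v + ∑ w ∈ Finset.univ.erase v, G.χ w = ∑ w, G.χ w :=
      Finset.add_sum_erase _ _ (Finset.mem_univ v)
    have h2 : ∑ w ∈ Finset.univ.erase v, G.χ w ≤ ((Finset.univ.erase v).card : ℤ) := by
      calc ∑ w ∈ Finset.univ.erase v, G.χ w ≤ ∑ _w ∈ Finset.univ.erase v, (1 : ℤ) :=
            Finset.sum_le_sum (fun w _ => G.χ_le_one w)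
        _ = ((Finset.univ.erase v).card : ℤ) := by simp
    have h3 : ((Finset.univ.erase v).card : ℤ) ≤ (mB : ℤ) := by
      have := Finset.card_le_card (Finset.erase_subset v (Finset.univ : Finset G.V))
      rw [Finset.card_univ] at this
      have h5 : (Finset.univ.erase v).card ≤ mB := le_trans this hm
      exact_mod_cast h5
    have h0 : (0:ℤ) ≤ (G.edgeCount : ℤ) := Int.natCast_nonneg _
    have h0' : (0:ℤ) ≤ ∑ w, (G.n w : ℤ) :=
      Finset.sum_nonneg (fun w _ => Int.natCast_nonneg _)
    rw [hlo]
    linarith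
  -- build the data point
  set k0 : ℕ := Fintype.card G.H with hk0
  set m0 : ℕ := Fintype.card G.V with hm0
  let eH : G.H ≃ Fin k0 := Fintype.equivFin G.H
  let eV : G.V ≃ Fin m0 := Fintype.equivFin G.V
  let d : GraphData Γ kB mB nB Sfin lo :=
    ⟨⟨k0, by omega⟩, ⟨m0, by omega⟩,
      fun i => eH (G.σ (eH.symm i)),
      fun i => eV (G.π (eH.symm i)),
      fun v => ⟨G.β (eV.symm v), hmemS _⟩,
      fun v => ⟨G.χ (eV.symm v), Finset.mem_Icc.mpr ⟨hχlo _, G.χ_le_one _⟩⟩,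
      fun v => ⟨G.n (eV.symm v), hnB _⟩⟩
  have hcond : (∀ i, d.2.2.1 (d.2.2.1 i) = i) ∧ (∀ i, d.2.2.1 i ≠ i) := by
    constructor
    · intro i
      show eH (G.σ (eH.symm (eH (G.σ (eH.symm i))))) = i
      simp [G.σ_invol]
    · intro i hi
      have hi' : G.σ (eH.symm i) = eH.symm i := by
        have := congrArg eH.symm hi
        exact (Equiv.symm_apply_apply eH _).symm.trans this
      exact G.σ_ne _ hi'
  refine ⟨mkGraph d, ?_, ?_⟩
  · exact List.mem_map_of_mem (Finset.mem_toList.mpr (Finset.mem_univ d))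
  · rw [mkGraph, dif_pos hcond]
    refine ⟨eH, eV, ?_, ?_, ?_, ?_, ?_⟩
    · intro h
      show eH (G.σ h) = eH (G.σ (eH.symm (eH h)))
      simp
    · intro h
      show eV (G.π h) = eV (G.π (eH.symm (eH h)))
      simp
    · intro v
      show G.β (eV.symm (eV v)) = G.β v
      simp
    · intro v
      show G.χ (eV.symm (eV v)) = G.χ v
      simp
    · intro v
      show G.n (eV.symm (eV v)) = G.n v
      simp
end

section
/- Let G be a finitely generated abelian group (with the discrete topology), γ ∈ G, and let X be the connected component of the identity of the Pontryagin dual Ĝ = Hom(G, U(1)), a compact topological group with normalized Haar probability measure μ. Then the integral ∫_X χ(γ) dμ(χ) (of the U(1) ⊂ ℂ valued function χ ↦ χ(γ)) is nonzero if and only if γ is a torsion element of G; moreover, in that case the integral equals 1. -/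
open MeasureTheory

/-- The Pontryagin dual `Ĝ = Hom(G, U(1))` of a (discrete) abelian group `G`: the group
homomorphisms from `G` to the circle group, topologized as a subspace of the product
`G → Circle` (for discrete `G`, the product topology coincides with the compact-open
topology). -/
abbrev CharGroup (G : Type*) [AddCommGroup G] : Type _ :=
  {f : G → Circle // ∀ x y : G, f (x + y) = f x * f y}

/-- The trivial character, the identity element of `Ĝ`. -/
noncomputable def charOne (G : Type*) [AddCommGroup G] : CharGroup G :=
  ⟨fun _ => 1, fun _ _ => (one_mul 1).symm⟩

/-- Pointwise multiplication of characters (the group operation of `Ĝ`). -/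
noncomputable def charMul {G : Type*} [AddCommGroup G] (a b : CharGroup G) : CharGroup G :=
  ⟨fun g => a.1 g * b.1 g, fun x y => by
    simp only []
    rw [a.2, b.2]
    exact mul_mul_mul_comm _ _ _ _⟩

section Aux

variable {G : Type*} [AddCommGroup G]

lemma char_map_zero (χ : CharGroup G) : χ.1 0 = 1 := by
  have h := χ.2 0 0
  rw [add_zero] at h
  exact (left_eq_mul.mp h)

lemma char_map_nsmul (χ : CharGroup G) (n : ℕ) (g : G) : χ.1 (n • g) = χ.1 g ^ n := by
  induction n with
  | zero => simpa using char_map_zero χ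
  | succ k ih => rw [succ_nsmul, χ.2, ih, pow_succ]

lemma continuous_eval (γ : G) : Continuous (fun χ : CharGroup G => (χ.1 γ : ℂ)) :=
  continuous_subtype_val.comp ((continuous_apply γ).comp continuous_subtype_val)

/-- Torsion elements are killed by every character in the identity component. -/
lemma char_eq_one_of_torsion {γ : G} (h : IsOfFinAddOrder γ)
    {χ : CharGroup G} (hχ : χ ∈ connectedComponent (charOne G)) : (χ.1 γ : ℂ) = 1 := by
  obtain ⟨n, hn, hnγ⟩ := h.exists_nsmul_eq_zero
  set f : CharGroup G → ℂ := fun χ => (χ.1 γ : ℂ) with hf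
  have hcont : Continuous f := continuous_eval γ
  set S : Set ℂ := f '' connectedComponent (charOne G) with hS
  have hpre : IsPreconnected S :=
    isPreconnected_connectedComponent.image f hcont.continuousOn
  have hsub : S ⊆ {z : ℂ | z ^ n = 1} := by
    rintro z ⟨χ, -, rfl⟩
    show (χ.1 γ : ℂ) ^ n = 1
    have h1 : χ.1 γ ^ n = 1 := by rw [← char_map_nsmul, hnγ, char_map_zero]
    calc (χ.1 γ : ℂ) ^ n = ((χ.1 γ ^ n : Circle) : ℂ) := (map_pow Circle.coeHom _ n).symm
      _ = 1 := by rw [h1, Circle.coe_one]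
  have hfin : S.Finite := by
    refine Set.Finite.subset ((Polynomial.nthRoots n (1 : ℂ)).toFinset.finite_toSet)
      (fun z hz => ?_)
    have := hsub hz
    simp only [Set.mem_setOf_eq] at this
    simp [Polynomial.mem_nthRoots hn, this]
  have hss : S.Subsingleton := by
    by_contra hcon
    rw [Set.not_subsingleton_iff] at hcon
    exact (hpre.infinite_of_nontrivial hcon) hfin
  have h1 : (1 : ℂ) ∈ S := ⟨charOne G, mem_connectedComponent, rfl⟩
  exact hss ⟨χ, hχ, rfl⟩ h1

/-- For a non-torsion element of a f.g. abelian group there is a character in the identity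
component taking value `-1` on it. -/
lemma exists_char_in_component_ne_one (G : Type*) [AddCommGroup G] [AddGroup.FG G]
    {γ : G} (h : ¬ IsOfFinAddOrder γ) :
    ∃ χ₀ ∈ connectedComponent (charOne G), (χ₀.1 γ : ℂ) = -1 := by
  -- get a hom to ℤ not vanishing on γ
  obtain ⟨n, ι, fι, p, hp, e, ⟨f⟩⟩ := AddCommGroup.equiv_free_prod_directSum_zmod G
  have hfst : (f γ).1 ≠ 0 := by
    intro h0
    apply h
    -- second component has finite order
    haveI : ∀ i, NeZero (p i ^ e i) := fun i => ⟨pow_ne_zero _ (hp i).pos.ne'⟩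
    haveI := fι
    haveI : DecidableEq ι := Classical.decEq ι
    haveI : Finite (DirectSum ι fun i => ZMod (p i ^ e i)) := by
      unfold DirectSum
      infer_instance
    have hd : IsOfFinAddOrder (f γ).2 := isOfFinAddOrder_of_finite _
    have h1 : IsOfFinAddOrder (f γ).1 := by rw [h0]; exact IsOfFinAddOrder.zero
    have hfγ : IsOfFinAddOrder (f γ) := by
      have := h1.prod_mk hd
      simpa using this
    have := f.symm.toAddMonoidHom.isOfFinAddOrder hfγ
    simpa using this
  obtain ⟨i, hi⟩ : ∃ i, (f γ).1 i ≠ 0 := by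
    by_contra hcon
    push_neg at hcon
    exact hfst (Finsupp.ext hcon)
  set φ : G →+ ℤ :=
    (Finsupp.applyAddHom i).comp ((AddMonoidHom.fst _ _).comp f.toAddMonoidHom) with hφ
  have hφγ : φ γ ≠ 0 := hi
  -- build the path of characters
  set P : ℝ → CharGroup G := fun t =>
    ⟨fun g => Circle.exp (t * (φ g : ℝ)), fun x y => by
      simp only [map_add]
      push_cast
      rw [mul_add, Circle.exp_add]⟩ with hP
  have hPcont : Continuous P := by
    apply Continuous.subtype_mk
    apply continuous_pi
    intro g
    exact Circle.exp.continuous.comp (continuous_id.mul continuous_const)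
  have hP0 : P 0 = charOne G := by
    apply Subtype.ext
    funext g
    simp [hP, charOne, Circle.exp_zero]
  have hmem : ∀ t, P t ∈ connectedComponent (charOne G) := by
    intro t
    have hrange : IsPreconnected (Set.range P) := isPreconnected_range hPcont
    exact hrange.subset_connectedComponent ⟨0, hP0⟩ (Set.mem_range_self t)
  refine ⟨P (Real.pi / (φ γ : ℝ)), hmem _, ?_⟩
  have hne : ((φ γ : ℤ) : ℝ) ≠ 0 := Int.cast_ne_zero.mpr hφγ
  show (Circle.exp (Real.pi / (φ γ : ℝ) * (φ γ : ℝ)) : ℂ) = -1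
  rw [div_mul_cancel₀ _ hne, Circle.coe_exp]
  simpa using Complex.exp_pi_mul_I

end Aux


/-- Let `G` be a finitely generated abelian group (with the discrete
topology), `γ ∈ G`, and let `X` be the connected component of the identity of the
Pontryagin dual `Ĝ = Hom(G, U(1))`, which is a compact topological group.  Let `μ` be the
normalized Haar probability measure of `X` (formalized as a Borel probability measure on
`Ĝ` which is concentrated on `X` and invariant under translation by every element of
`X`).  Then the integral `∫_X χ(γ) dμ(χ)` of the `U(1) ⊂ ℂ`-valued function `χ ↦ χ(γ)`
is nonzero if and only if `γ` is a torsion element of `G`; moreover, in that case the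
integral equals `1`. -/
theorem integral_char_ne_zero_iff_torsion
    (G : Type*) [AddCommGroup G] [AddGroup.FG G]
    [MeasurableSpace (CharGroup G)] [BorelSpace (CharGroup G)]
    (γ : G) (μ : Measure (CharGroup G)) [IsProbabilityMeasure μ]
    (hsupp : μ (connectedComponent (charOne G))ᶜ = 0)
    (hinv : ∀ χ₀ ∈ connectedComponent (charOne G), μ.map (charMul χ₀) = μ) :
    ((∫ χ : CharGroup G, (χ.1 γ : ℂ) ∂μ) ≠ 0 ↔ IsOfFinAddOrder γ) ∧
      (IsOfFinAddOrder γ → (∫ χ : CharGroup G, (χ.1 γ : ℂ) ∂μ) = 1) := by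
  have hcont : Continuous (fun χ : CharGroup G => (χ.1 γ : ℂ)) := continuous_eval γ
  -- torsion case: integral = 1
  have hone : IsOfFinAddOrder γ → (∫ χ : CharGroup G, (χ.1 γ : ℂ) ∂μ) = 1 := by
    intro h
    have hX : ∀ᵐ χ ∂μ, χ ∈ connectedComponent (charOne G) := by
      rw [ae_iff]
      exact hsupp
    have hae : (fun χ : CharGroup G => (χ.1 γ : ℂ)) =ᵐ[μ] fun _ => (1 : ℂ) := by
      filter_upwards [hX] with χ hχ
      exact char_eq_one_of_torsion h hχ
    rw [integral_congr_ae hae]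
    simp
  -- non-torsion case: integral = 0
  have hzero : ¬ IsOfFinAddOrder γ → (∫ χ : CharGroup G, (χ.1 γ : ℂ) ∂μ) = 0 := by
    intro h
    obtain ⟨χ₀, hχ₀, hval⟩ := exists_char_in_component_ne_one G h
    have hmc : Continuous (charMul χ₀) := by
      apply Continuous.subtype_mk
      apply continuous_pi
      intro g
      exact (continuous_const.mul ((continuous_apply g).comp continuous_subtype_val))
    have hkey : (∫ χ : CharGroup G, (χ.1 γ : ℂ) ∂μ)
        = (χ₀.1 γ : ℂ) * ∫ χ : CharGroup G, (χ.1 γ : ℂ) ∂μ := by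
      conv_lhs => rw [← hinv χ₀ hχ₀]
      rw [integral_map hmc.aemeasurable (by rw [hinv χ₀ hχ₀]; exact hcont.aestronglyMeasurable)]
      have : ∀ χ : CharGroup G, (((charMul χ₀ χ).1 γ : ℂ)) = (χ₀.1 γ : ℂ) * (χ.1 γ : ℂ) := by
        intro χ; simp [charMul]
      simp_rw [this]
      rw [integral_const_mul]
    have : ((χ₀.1 γ : ℂ) - 1) * (∫ χ : CharGroup G, (χ.1 γ : ℂ) ∂μ) = 0 := by
      rw [sub_mul, ← hkey, one_mul, sub_self]
    rcases mul_eq_zero.mp this with h1 | h2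
    · exfalso
      rw [hval] at h1
      norm_num at h1
    · exact h2
  constructor
  · constructor
    · intro hne
      by_contra hnot
      exact hne (hzero hnot)
    · intro h
      rw [hone h]
      norm_num
  · exact hone
end
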